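/- Fix c > 0 and d ≥ c. The function p ↦ γ_p = (c²/(2d)) { p [ 2(d/c)² + 1/p − 1/2 ] }^{1/p} is strictly decreasing in p on (1,2], with γ_2 = c, and lim_{p↘1} γ_p = d + c²/(4d). -/

import Mathlib

open MeasureTheory Real Filter

noncomputable def phi (p x : ℝ) : ℝ :=
  if |x| ≤ 1 then x ^ 2 / 2 else |x| ^ p / p - 1 / p + 1 / 2

noncomputable def gam (r c d : ℝ) : ℝ :=
  c ^ 2 / (2 * d) * (r * (2 * (d / c) ^ 2 + 1 / r - 1 / 2)) ^ (1 / r)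

lemma log_gt (u : ℝ) (hu : 1 < u) : 1 - 1/u < Real.log u := by
  have h0 : (0:ℝ) < 1/u := by positivity
  have h1 : (1/u : ℝ) ≠ 1 := by
    have : (1/u) < 1 := by
      rw [div_lt_one (by linarith)]; linarith
    linarith
  have := Real.log_lt_sub_one_of_pos h0 h1
  rw [one_div, Real.log_inv, inv_eq_one_div] at this
  linarith [this]

lemma h_anti (A : ℝ) (hA : 0 < A) :
    StrictAntiOn (fun p : ℝ => Real.log (p * A + 1) / p) (Set.Ioc 1 2) := by
  have key : ∀ x ∈ Set.Ioo (1:ℝ) 2,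
      HasDerivAt (fun p : ℝ => Real.log (p * A + 1) / p)
        ((A / (x * A + 1) * x - Real.log (x * A + 1) * 1) / x ^ 2) x := by
    intro x hx
    have hx1 : 1 < x := hx.1
    have hxne : x ≠ 0 := by linarith
    have hune : x * A + 1 ≠ 0 := by nlinarith
    have h1 : HasDerivAt (fun p : ℝ => p * A + 1) A x := by
      simpa using ((hasDerivAt_id x).mul_const A).add_const 1
    have h2 : HasDerivAt (fun p : ℝ => Real.log (p * A + 1)) (A / (x * A + 1)) x :=
      h1.log hune
    exact h2.div (hasDerivAt_id x) hxne
  apply StrictAntiOn.mono ?_ (le_refl (Set.Ioc 1 2))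
  apply strictAntiOn_of_deriv_neg (convex_Ioc 1 2)
  · apply ContinuousOn.div
    · apply ContinuousOn.log
      · fun_prop
      · intro x hx
        have : 1 < x := hx.1
        nlinarith
    · fun_prop
    · intro x hx
      have : 1 < x := hx.1
      linarith
  · rw [interior_Ioc]
    intro x hx
    rw [(key x hx).deriv]
    have hx1 : 1 < x := hx.1
    have hu : 1 < x * A + 1 := by nlinarith
    apply div_neg_of_neg_of_pos
    · have hlog := log_gt (x * A + 1) hu
      have hupos : (0:ℝ) < x * A + 1 := by linarith
      have : A / (x * A + 1) * x = 1 - 1 / (x * A + 1) := by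
        field_simp; ring
      rw [this]
      linarith
    · positivity

theorem stmt_14 (c d : ℝ) (hc : 0 < c) (hd : c ≤ d) :
    StrictAntiOn (fun p : ℝ => gam p c d) (Set.Ioc 1 2) ∧
    gam 2 c d = c ∧
    Tendsto (fun p : ℝ => gam p c d) (nhdsWithin 1 (Set.Ioi 1)) (nhds (d + c ^ 2 / (4 * d))) := by
  have hd0 : 0 < d := lt_of_lt_of_le hc hd
  set A : ℝ := 2 * (d / c) ^ 2 - 1 / 2 with hAdef
  have hdc : 1 ≤ d / c := (one_le_div hc).2 hd
  have hA : 0 < A := by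
    have : (1:ℝ) ≤ (d/c)^2 := by nlinarith
    rw [hAdef]; nlinarith
  have hK : 0 < c ^ 2 / (2 * d) := by positivity
  have inner_eq : ∀ p : ℝ, p ≠ 0 →
      p * (2 * (d / c) ^ 2 + 1 / p - 1 / 2) = p * A + 1 := by
    intro p hp
    rw [hAdef]; field_simp; ring
  have gam_eq : ∀ p ∈ Set.Ioc (1:ℝ) 2,
      gam p c d = c ^ 2 / (2 * d) * Real.exp (Real.log (p * A + 1) / p) := by
    intro p hp
    have hp1 : 1 < p := hp.1
    have hu : 0 < p * A + 1 := by nlinarith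
    unfold gam
    rw [inner_eq p (by linarith), Real.rpow_def_of_pos hu]
    ring_nf
  refine ⟨?_, ?_, ?_⟩
  · intro a ha b hb hab
    show gam b c d < gam a c d
    rw [gam_eq a ha, gam_eq b hb]
    exact mul_lt_mul_of_pos_left (Real.exp_lt_exp.2 (h_anti A hA ha hb hab)) hK
  · unfold gam
    have h1 : (2:ℝ) * (2 * (d / c) ^ 2 + 1 / 2 - 1 / 2) = (2 * d / c) ^ (2:ℕ) := by
      field_simp; ring
    rw [h1, ← Real.rpow_natCast (2 * d / c) 2, ← Real.rpow_mul (by positivity)]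
    norm_num
    field_simp
  · have hcont : ContinuousAt (fun p : ℝ => gam p c d) 1 := by
      unfold gam
      apply ContinuousAt.mul continuousAt_const
      apply ContinuousAt.rpow
      · apply ContinuousAt.mul continuousAt_id
        apply ContinuousAt.sub
        apply ContinuousAt.add continuousAt_const
        · exact ContinuousAt.div continuousAt_const continuousAt_id one_ne_zero
        · exact continuousAt_const
      · exact ContinuousAt.div continuousAt_const continuousAt_id one_ne_zero
      · left
        have : (1:ℝ) ≤ (d/c)^2 := by nlinarith
        simp only [one_mul]
        nlinarith
    have hval : gam 1 c d = d + c ^ 2 / (4 * d) := by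
      unfold gam
      norm_num
      field_simp
      ring
    rw [← hval]
    exact hcont.continuousWithinAt.tendsto
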